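/- Let H be an n×n real symmetric positive semi-definite matrix of rank r, and let the index set {1,…,n} be partitioned into K blocks of sizes n₁,…,n_K. Then for every M > 0 there exist positive reals α₁,…,α_K with ∏_{k=1}^K α_k = 1 such that, writing D_α for the diagonal matrix whose entries equal α_k⁻¹ on block k, the matrix D_α H D_α has at least r − min_{k ≤ K} n_k eigenvalues strictly greater than M. -/

import Mathlib

open Finset Matrix
set_option maxHeartbeats 2000000

section Helpers

variable {m : Type*} [Fintype m] [DecidableEq m]

lemma inner_mulVec_eq_sum {A : Matrix m m ℝ} (hA : A.IsHermitian) (x : EuclideanSpace ℝ m) :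
    x ⬝ᵥ A *ᵥ x = ∑ i, hA.eigenvalues i * (inner ℝ (hA.eigenvectorBasis i) x : ℝ) ^ 2 := by
  have h := hA.eigenvectorBasis.sum_inner_mul_inner x (WithLp.toLp 2 (A *ᵥ x))
  have hx : ∀ i, (inner ℝ (hA.eigenvectorBasis i) (WithLp.toLp 2 (A *ᵥ x)) : ℝ)
      = hA.eigenvalues i * (inner ℝ (hA.eigenvectorBasis i) x : ℝ) := by
    intro i
    have h1 : (inner ℝ (hA.eigenvectorBasis i) (WithLp.toLp 2 (A *ᵥ x)) : ℝ)
        = (hA.eigenvectorBasis i : m → ℝ) ⬝ᵥ (A *ᵥ x) := by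
      simp [PiLp.inner_apply, dotProduct, mul_comm]
    have h2 : (hA.eigenvectorBasis i : m → ℝ) ⬝ᵥ (A *ᵥ x)
        = (A *ᵥ (hA.eigenvectorBasis i : m → ℝ)) ⬝ᵥ x := by
      rw [dotProduct_mulVec, ← mulVec_transpose]
      congr 1
      rw [show Aᵀ = A from hA]
    rw [h1, h2]
    rw [show A *ᵥ (hA.eigenvectorBasis i : m → ℝ)
        = hA.eigenvalues i • (hA.eigenvectorBasis i : m → ℝ) from hA.mulVec_eigenvectorBasis i,
      smul_dotProduct]
    simp [PiLp.inner_apply, dotProduct, mul_comm]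
  have hxx : x ⬝ᵥ A *ᵥ x = (inner ℝ x (WithLp.toLp 2 (A *ᵥ x)) : ℝ) := by
    simp [PiLp.inner_apply, dotProduct, mul_comm]
  rw [hxx, ← h]
  refine Finset.sum_congr rfl fun i _ => ?_
  rw [hx i, real_inner_comm x]
  ring

lemma dot_self_eq_sum {A : Matrix m m ℝ} (hA : A.IsHermitian) (x : EuclideanSpace ℝ m) :
    x ⬝ᵥ x = ∑ i, (inner ℝ (hA.eigenvectorBasis i) x : ℝ) ^ 2 := by
  have h := hA.eigenvectorBasis.sum_inner_mul_inner x x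
  have : x ⬝ᵥ x = (inner ℝ x x : ℝ) := by simp only [PiLp.inner_apply, RCLike.inner_apply, conj_trivial, dotProduct]
  rw [this, ← h]
  refine Finset.sum_congr rfl fun i _ => ?_
  rw [real_inner_comm x]; ring

omit [DecidableEq m] in
lemma coeff_zero_of_mem_span {b : OrthonormalBasis m ℝ (EuclideanSpace ℝ m)} {T : Set m}
    {x : EuclideanSpace ℝ m} (hx : x ∈ Submodule.span ℝ (b '' T)) {j : m} (hj : j ∉ T) :
    (inner ℝ (b j) x : ℝ) = 0 := by
  induction hx using Submodule.span_induction with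
  | mem y hy =>
      obtain ⟨i, hi, rfl⟩ := hy
      exact b.orthonormal.2 (fun h => hj (h ▸ hi))
  | zero => simp
  | add y z _ _ hy hz => rw [inner_add_right, hy, hz]; simp
  | smul c y _ hy => rw [inner_smul_right, hy]; simp

lemma count_large_eigs {A : Matrix m m ℝ} (hA : A.IsHermitian) (M : ℝ)
    (V : Submodule ℝ (EuclideanSpace ℝ m))
    (hV : ∀ x ∈ V, x ≠ 0 → M * (x ⬝ᵥ x) < x ⬝ᵥ A *ᵥ x) :
    Module.finrank ℝ V ≤ (Finset.univ.filter (fun i => M < hA.eigenvalues i)).card := by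
  by_contra hcon
  push_neg at hcon
  set b := hA.eigenvectorBasis with hb
  set T : Finset m := Finset.univ.filter (fun i => ¬ M < hA.eigenvalues i) with hT
  set W := Submodule.span ℝ (b '' (T : Set m)) with hW
  have hWrank : Module.finrank ℝ W = T.card := by
    have hli : LinearIndependent ℝ (fun t : (T : Set m) => b t.val) :=
      b.orthonormal.linearIndependent.comp Subtype.val Subtype.val_injective
    have hrange : Set.range (fun t : (T : Set m) => b t.val) = b '' (T : Set m) := by
      rw [show (fun t : (T : Set m) => b t.val) = b ∘ Subtype.val from rfl, Set.range_comp,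
        Subtype.range_val]
    rw [hW, ← hrange, finrank_span_eq_card hli]
    simp
  have hcards : (Finset.univ.filter (fun i => M < hA.eigenvalues i)).card + T.card
      = Fintype.card m := by
    rw [hT]
    exact Finset.card_filter_add_card_filter_not _
  have htot : Module.finrank ℝ (EuclideanSpace ℝ m) = Fintype.card m :=
    finrank_euclideanSpace
  have hsum := Submodule.finrank_sup_add_finrank_inf_eq V W
  have hle : Module.finrank ℝ ↥(V ⊔ W) ≤ Fintype.card m :=
    htot ▸ Submodule.finrank_le _
  have hpos : 0 < Module.finrank ℝ ↥(V ⊓ W) := by omega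
  have hnebot : V ⊓ W ≠ ⊥ := by
    intro h
    rw [h, finrank_bot] at hpos
    exact lt_irrefl 0 hpos
  obtain ⟨x, hx, hx0⟩ := Submodule.exists_mem_ne_zero_of_ne_bot hnebot
  have hupper : x ⬝ᵥ A *ᵥ x ≤ M * (x ⬝ᵥ x) := by
    rw [inner_mulVec_eq_sum hA x, dot_self_eq_sum hA x, Finset.mul_sum]
    refine Finset.sum_le_sum fun i _ => ?_
    by_cases hi : i ∈ T
    · have hle' : hA.eigenvalues i ≤ M := not_lt.mp (Finset.mem_filter.mp hi).2
      exact mul_le_mul_of_nonneg_right hle' (sq_nonneg _)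
    · rw [coeff_zero_of_mem_span hx.2 (by simpa using hi)]
      simp
  exact absurd (hV x hx.1 hx0) (not_lt.mpr hupper)

lemma quad_lower {A : Matrix m m ℝ} (hA : A.IsHermitian) {μ : ℝ} (T : Finset m)
    (hT : ∀ j ∈ T, μ ≤ hA.eigenvalues j)
    {x : EuclideanSpace ℝ m} (hx : x ∈ Submodule.span ℝ (hA.eigenvectorBasis '' (T : Set m))) :
    μ * (x ⬝ᵥ x) ≤ x ⬝ᵥ A *ᵥ x := by
  rw [inner_mulVec_eq_sum hA x, dot_self_eq_sum hA x, Finset.mul_sum]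
  refine Finset.sum_le_sum fun i _ => ?_
  by_cases hi : i ∈ T
  · exact mul_le_mul_of_nonneg_right (hT i hi) (sq_nonneg _)
  · rw [coeff_zero_of_mem_span hx (by simpa using hi)]
    simp

variable (p : m → Prop) [DecidablePred p]

/-- Extension by zero of a vector on a subtype. -/
def extL : ({i // p i} → ℝ) →ₗ[ℝ] (m → ℝ) where
  toFun y i := if h : p i then y ⟨i, h⟩ else 0
  map_add' y z := by funext i; by_cases h : p i <;> simp [h]
  map_smul' c y := by funext i; by_cases h : p i <;> simp [h]

variable {p}

omit [Fintype m] [DecidableEq m] in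
lemma extL_apply_val (y : {i // p i} → ℝ) (j : {i // p i}) : extL p y j.val = y j := by
  simp only [extL, LinearMap.coe_mk, AddHom.coe_mk]
  rw [dif_pos j.property]

omit [Fintype m] [DecidableEq m] in
lemma extL_apply_neg (y : {i // p i} → ℝ) {i : m} (h : ¬ p i) : extL p y i = 0 := by
  simp [extL, h]

omit [Fintype m] [DecidableEq m] in
lemma extL_injective : Function.Injective (extL p) := by
  intro y z h
  funext j
  have := congrFun h j.val
  rwa [extL_apply_val, extL_apply_val] at this

lemma extL_dot (y : {i // p i} → ℝ) (f : m → ℝ) :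
    extL p y ⬝ᵥ f = ∑ j : {i // p i}, y j * f j.val := by
  have h1 : ∑ j : {i // p i}, y j * f j.val
      = ∑ j : {i // p i}, extL p y j.val * f j.val :=
    Finset.sum_congr rfl fun j _ => by rw [extL_apply_val]
  have h2 : ∑ i ∈ Finset.univ.filter p, extL p y i * f i
      = ∑ j : {i // p i}, extL p y j.val * f j.val :=
    Finset.sum_subtype (p := p) _ (by simp) (fun i => extL p y i * f i)
  have h3 : ∑ i ∈ Finset.univ.filter p, extL p y i * f i
      = ∑ i, extL p y i * f i := by
    refine Finset.sum_filter_of_ne fun i _ hne => ?_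
    by_contra h
    exact hne (by rw [extL_apply_neg y h, zero_mul])
  rw [dotProduct, ← h3, h2, h1]

lemma extL_dot_self (y : {i // p i} → ℝ) : extL p y ⬝ᵥ extL p y = y ⬝ᵥ y := by
  rw [extL_dot, dotProduct]
  exact Finset.sum_congr rfl fun j _ => by rw [extL_apply_val]

lemma extL_dot_mulVec (A : Matrix m m ℝ) (y : {i // p i} → ℝ) :
    extL p y ⬝ᵥ (A *ᵥ extL p y) = y ⬝ᵥ ((A.submatrix Subtype.val Subtype.val) *ᵥ y) := by
  rw [extL_dot, dotProduct]
  refine Finset.sum_congr rfl fun j _ => ?_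
  congr 1
  have h1 : (A *ᵥ extL p y) j.val = (fun i => A j.val i) ⬝ᵥ extL p y := rfl
  have h2 : ((A.submatrix Subtype.val Subtype.val) *ᵥ y) j
      = ∑ j' : {i // p i}, A j.val j'.val * y j' := rfl
  rw [h1, dotProduct_comm, extL_dot, h2]
  exact Finset.sum_congr rfl fun j' _ => by rw [mul_comm]

/-- A principal submatrix of a PSD matrix loses at most `card {i // ¬ p i}` of rank. -/
lemma rank_le_submatrix_rank_add (p : m → Prop) [DecidablePred p] {A : Matrix m m ℝ}
    (hA : A.PosSemidef) :
    A.rank ≤ (A.submatrix (Subtype.val : {i // p i} → m) (Subtype.val : {i // p i} → m)).rank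
      + Fintype.card {i // ¬ p i} := by
  set A' := A.submatrix (Subtype.val : {i // p i} → m) (Subtype.val : {i // p i} → m) with hA'
  have hrn1 : A.rank + Module.finrank ℝ (LinearMap.ker A.mulVecLin) = Fintype.card m := by
    rw [Matrix.rank]
    rw [LinearMap.finrank_range_add_finrank_ker A.mulVecLin]
    simp [Module.finrank_fintype_fun_eq_card]
  have hrn2 : A'.rank + Module.finrank ℝ (LinearMap.ker A'.mulVecLin)
      = Fintype.card {i // p i} := by
    rw [Matrix.rank, LinearMap.finrank_range_add_finrank_ker A'.mulVecLin]
    simp [Module.finrank_fintype_fun_eq_card]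
  have hker : ∀ y ∈ LinearMap.ker A'.mulVecLin, A *ᵥ extL p y = 0 := by
    intro y hy
    rw [LinearMap.mem_ker, mulVecLin_apply] at hy
    have hq : extL p y ⬝ᵥ (A *ᵥ extL p y) = 0 := by
      rw [extL_dot_mulVec, ← hA', hy, dotProduct_zero]
    exact (hA.dotProduct_mulVec_zero_iff (extL p y)).mp (by
      rwa [show star (extL p y) = extL p y from funext fun i => star_trivial _])
  have hinj : Module.finrank ℝ (LinearMap.ker A'.mulVecLin)
      ≤ Module.finrank ℝ (LinearMap.ker A.mulVecLin) := by
    refine LinearMap.finrank_le_finrank_of_injective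
      (f := LinearMap.codRestrict _ ((extL p).comp (LinearMap.ker A'.mulVecLin).subtype)
        (fun y => by rw [LinearMap.mem_ker, mulVecLin_apply]
                     exact hker y.val y.property)) ?_
    intro y z h
    have := congrArg Subtype.val h
    simp only [LinearMap.codRestrict_apply, LinearMap.comp_apply, Submodule.subtype_apply] at this
    exact Subtype.ext (extL_injective this)
  have hcard : Fintype.card m = Fintype.card {i // p i} + Fintype.card {i // ¬ p i} := by
    rw [Fintype.card_subtype_compl]
    have := Fintype.card_subtype_le p
    omega
  omega

end Helpers

theorem rescaled_hessian_many_large_eigenvalues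
    (K : ℕ) (hK : 0 < K) (n : Fin K → ℕ)
    (H : Matrix ((k : Fin K) × Fin (n k)) ((k : Fin K) × Fin (n k)) ℝ)
    (hsymm : H.IsSymm) (hpsd : H.PosSemidef)
    (r : ℕ) (hr : H.rank = r) (M : ℝ) (hM : 0 < M) :
    ∃ α : Fin K → ℝ, (∀ k, 0 < α k) ∧ (∏ k, α k = 1) ∧
      ∀ hHerm : (Matrix.diagonal (fun i : (k : Fin K) × Fin (n k) => (α i.1)⁻¹) * H *
          Matrix.diagonal (fun i : (k : Fin K) × Fin (n k) => (α i.1)⁻¹)).IsHermitian,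
        r - Finset.univ.inf' ⟨⟨0, hK⟩, Finset.mem_univ _⟩ n ≤
          (Finset.univ.filter (fun i => M < hHerm.eigenvalues i)).card := by
  classical
  obtain ⟨k₀, -, hk₀⟩ := Finset.exists_mem_eq_inf' (⟨⟨0, hK⟩, Finset.mem_univ _⟩ :
    (Finset.univ : Finset (Fin K)).Nonempty) n
  set p : ((k : Fin K) × Fin (n k)) → Prop := fun i => i.1 ≠ k₀ with hp
  set H' := H.submatrix (Subtype.val : {i : ((k : Fin K) × Fin (n k)) // p i} → ((k : Fin K) × Fin (n k))) (Subtype.val : {i : ((k : Fin K) × Fin (n k)) // p i} → ((k : Fin K) × Fin (n k)))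
    with hH'
  -- positive semidefiniteness of the principal submatrix
  have hH'psd : H'.PosSemidef := by
    refine posSemidef_iff_dotProduct_mulVec.mpr ⟨?_, fun y => ?_⟩
    · rw [hH']
      exact hpsd.1.submatrix _
    have hs : star y = y := funext fun i => star_trivial _
    rw [hs, hH', ← extL_dot_mulVec H y]
    have := hpsd.dotProduct_mulVec_nonneg (extL p y)
    rwa [show star (extL p y) = extL p y from funext fun i => star_trivial _] at this
  have hH'herm : H'.IsHermitian := hH'psd.1
  -- the cardinality of the removed block
  have hcard_block : Fintype.card {i : ((k : Fin K) × Fin (n k)) // ¬ p i} = n k₀ := by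
    have e1 : {i : ((k : Fin K) × Fin (n k)) // ¬ p i} ≃ {i : ((k : Fin K) × Fin (n k)) // i.1 = k₀} :=
      Equiv.subtypeEquivRight (fun i => by simp [hp])
    have e2 : Fin (n k₀) ≃ {i : ((k : Fin K) × Fin (n k)) // i.1 = k₀} := by
      refine Equiv.ofBijective (fun j => ⟨⟨k₀, j⟩, rfl⟩) ⟨?_, ?_⟩
      · intro a b h
        have h2 : (⟨k₀, a⟩ : (k : Fin K) × Fin (n k)) = ⟨k₀, b⟩ := congrArg Subtype.val h
        simpa using h2
      · rintro ⟨⟨k, j⟩, h⟩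
        simp only at h
        subst h
        exact ⟨j, rfl⟩
    rw [Fintype.card_congr e1, ← Fintype.card_congr e2, Fintype.card_fin]
  -- the eigen-structure of the submatrix
  set Tpos : Finset {i : ((k : Fin K) × Fin (n k)) // p i} :=
    Finset.univ.filter (fun j => hH'herm.eigenvalues j ≠ 0) with hTpos
  have hrank' : H'.rank = Tpos.card := by
    rw [hH'herm.rank_eq_card_non_zero_eigs, Fintype.card_subtype]
  have hrk := rank_le_submatrix_rank_add p hpsd
  rw [hr, ← hH', hrank', hcard_block] at hrk
  -- the main inequality between `r` and `Tpos.card`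
  have hinf : Finset.univ.inf' ⟨⟨0, hK⟩, Finset.mem_univ _⟩ n = n k₀ := hk₀
  rcases Finset.eq_empty_or_nonempty Tpos with hTe | hTne
  · -- trivial case : the submatrix is zero
    refine ⟨fun _ => 1, fun _ => one_pos, by simp, fun hHerm => ?_⟩
    rw [hinf]
    rw [hTe, Finset.card_empty] at hrk
    omega
  -- nontrivial case
  set μ := Tpos.inf' hTne hH'herm.eigenvalues with hμ
  have hμpos : 0 < μ := by
    rw [hμ, Finset.lt_inf'_iff]
    intro j hj
    have h0 := hH'psd.eigenvalues_nonneg j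
    have hne : hH'herm.eigenvalues j ≠ 0 := (Finset.mem_filter.mp hj).2
    exact lt_of_le_of_ne h0 (Ne.symm hne)
  set c : ℝ := M / μ + 1 with hc
  have hcpos : 0 < c := by positivity
  have hcμ : M < c * μ := by
    rw [hc]
    have : (M / μ + 1) * μ = M + μ := by field_simp
    rw [this]
    linarith
  set s : ℝ := Real.sqrt c with hs
  have hspos : 0 < s := Real.sqrt_pos.mpr hcpos
  have hss : s * s = c := Real.mul_self_sqrt hcpos.le
  set ε : ℝ := s⁻¹ with hε
  have hεpos : 0 < ε := by positivity
  refine ⟨fun k => if k = k₀ then (ε ^ (K - 1))⁻¹ else ε, fun k => ?_, ?_, fun hHerm => ?_⟩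
  · by_cases h : k = k₀ <;> simp [h] <;> positivity
  · rw [← Finset.mul_prod_erase Finset.univ _ (Finset.mem_univ k₀), if_pos rfl]
    have hprod : ∏ k ∈ Finset.univ.erase k₀, (if k = k₀ then (ε ^ (K - 1))⁻¹ else ε) = ε ^ (K - 1) := by
      rw [Finset.prod_congr rfl (fun k hk => if_neg (Finset.ne_of_mem_erase hk)),
        Finset.prod_const, Finset.card_erase_of_mem (Finset.mem_univ _), Finset.card_univ,
        Fintype.card_fin]
    rw [hprod, inv_mul_cancel₀ (pow_ne_zero _ (ne_of_gt hεpos))]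
  · -- the heart of the proof
    rw [hinf]
    set α : Fin K → ℝ := fun k => if k = k₀ then (ε ^ (K - 1))⁻¹ else ε with hα
    set D := Matrix.diagonal (fun i : ((k : Fin K) × Fin (n k)) => (α i.1)⁻¹) with hD
    set A := D * H * D with hA
    set b' := hH'herm.eigenvectorBasis with hb'
    set V : Submodule ℝ (EuclideanSpace ℝ ((k : Fin K) × Fin (n k))) :=
      Submodule.map ((WithLp.linearEquiv 2 ℝ _).symm.toLinearMap ∘ₗ extL p ∘ₗ (WithLp.linearEquiv 2 ℝ _).toLinearMap) (Submodule.span ℝ (b' '' (Tpos : Set {i : ((k : Fin K) × Fin (n k)) // p i}))) with hV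
    have hVrank : Module.finrank ℝ V = Tpos.card := by
      have hli : LinearIndependent ℝ (fun t : (Tpos : Set {i : ((k : Fin K) × Fin (n k)) // p i}) =>
          b' t.val) :=
        b'.orthonormal.linearIndependent.comp Subtype.val Subtype.val_injective
      have hrange : Set.range (fun t : (Tpos : Set {i : ((k : Fin K) × Fin (n k)) // p i}) =>
          b' t.val) = ⇑b' '' (Tpos : Set {i : ((k : Fin K) × Fin (n k)) // p i}) := by
        rw [show (fun t : (Tpos : Set {i : ((k : Fin K) × Fin (n k)) // p i}) => b' t.val)
            = ⇑b' ∘ Subtype.val from rfl, Set.range_comp, Subtype.range_val]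
      have h2 : Module.finrank ℝ
          ↥(Submodule.span ℝ (⇑b' '' (Tpos : Set {i : ((k : Fin K) × Fin (n k)) // p i})))
          = Tpos.card := by
        rw [← hrange, finrank_span_eq_card hli]
        simp
      have e := Submodule.equivMapOfInjective ((WithLp.linearEquiv 2 ℝ _).symm.toLinearMap ∘ₗ extL p ∘ₗ (WithLp.linearEquiv 2 ℝ _).toLinearMap) ((WithLp.linearEquiv 2 ℝ _).symm.injective.comp (extL_injective.comp (WithLp.linearEquiv 2 ℝ _).injective))
        (Submodule.span ℝ (⇑b' '' (Tpos : Set {i : ((k : Fin K) × Fin (n k)) // p i})))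
      rw [hV]
      exact (LinearEquiv.finrank_eq e).symm.trans h2
    -- the quadratic form bound on V
    have hVbound : ∀ x ∈ V, x ≠ 0 → M * (x ⬝ᵥ x) < x ⬝ᵥ A *ᵥ x := by
      rintro x hx hx0
      obtain ⟨y, hy, rfl⟩ := Submodule.mem_map.mp hx
      have hy0 : y ≠ 0 := fun h => hx0 (by rw [h]; exact map_zero _)
      show M * ((extL p y) ⬝ᵥ (extL p y)) < (extL p y) ⬝ᵥ A *ᵥ (extL p y)
      -- D acts as s • on vectors supported in p
      have hDx : D *ᵥ (extL p y) = s • (extL p y) := by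
        funext i
        rw [hD, mulVec_diagonal]
        by_cases h : p i
        · have : α i.1 = ε := if_neg h
          rw [Pi.smul_apply, this, hε, inv_inv, smul_eq_mul]
        · rw [extL_apply_neg y h, mul_zero, Pi.smul_apply, extL_apply_neg y h, smul_zero]
      have hxD : (extL p y) ᵥ* D = s • (extL p y) := by
        funext i
        rw [hD, vecMul_diagonal]
        by_cases h : p i
        · have : α i.1 = ε := if_neg h
          rw [Pi.smul_apply, this, hε, inv_inv, smul_eq_mul, mul_comm]
        · rw [extL_apply_neg y h, zero_mul, Pi.smul_apply, extL_apply_neg y h, smul_zero]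
      have hquad : (extL p y) ⬝ᵥ A *ᵥ (extL p y) = c * (y ⬝ᵥ H' *ᵥ y) := by
        rw [hA, ← Matrix.mulVec_mulVec, ← Matrix.mulVec_mulVec, hDx,
          Matrix.dotProduct_mulVec _ D, hxD, mulVec_smul, smul_dotProduct, dotProduct_smul,
          smul_eq_mul, smul_eq_mul, ← mul_assoc, hss, hH']
        rw [extL_dot_mulVec H y]
      have hlow : μ * (y ⬝ᵥ y) ≤ y ⬝ᵥ H' *ᵥ y := by
        refine quad_lower hH'herm Tpos (fun j hj => Finset.inf'_le _ hj) ?_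
        exact hy
      have hyy : 0 < y ⬝ᵥ y := by
        rcases lt_or_eq_of_le (Finset.sum_nonneg fun i _ => mul_self_nonneg (y i)) with h | h
        · exact h
        · exact absurd (dotProduct_self_eq_zero.mp h.symm) (fun h0 => hy0 ((WithLp.linearEquiv 2 ℝ (_ → ℝ)).injective (by rw [map_zero]; exact h0)))
      have hxx : (extL p y) ⬝ᵥ (extL p y) = y ⬝ᵥ y := extL_dot_self y
      rw [hquad, hxx]
      have h1 : c * (μ * (y ⬝ᵥ y)) ≤ c * (y ⬝ᵥ H' *ᵥ y) :=
        mul_le_mul_of_nonneg_left hlow hcpos.le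
      nlinarith
    have := count_large_eigs hHerm M V hVbound
    rw [hVrank] at this
    omega
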